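/- Let L be a complete lattice in which ⊥ is cocompact, i.e., for every subset A ⊆ L with ⨅ A = ⊥ there exists a finite subset A' ⊆ A with ⨅ A' = ⊥. Let p ∈ L with Ω(p) ≠ ∅, i.e., there exists x ≠ ⊥ with x ⊓ p = ⊥. Then p is strongly irreducible in L if and only if there exists an atom a ∈ L such that p is a pseudo-complement of a (i.e., a ⊓ p = ⊥ and every x ∈ L with a ⊓ x = ⊥ satisfies x ≤ p). Moreover, in this case every element of L is comparable to a or comparable to p. -/

import Mathlib

/-- An element `p` of a lattice is *strongly irreducible* if
`a ⊓ b ≤ p` implies `a ≤ p` or `b ≤ p` for all `a b`. -/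
def StronglyIrreducible {α : Type*} [SemilatticeInf α] (p : α) : Prop :=
  ∀ a b : α, a ⊓ b ≤ p → a ≤ p ∨ b ≤ p

/-- Let `L` be a complete lattice in which `⊥` is cocompact and let `p` satisfy
`Ω(p) ≠ ∅`.  Then `p` is strongly irreducible iff `p` is a pseudo-complement of an
atom `a`; moreover in this case every element is comparable to `a` or to `p`. -/
theorem stronglyIrreducible_iff_pseudoComplement_atom
    {α : Type*} [CompleteLattice α]
    (hbot : ∀ A : Set α, sInf A = ⊥ → ∃ A' : Set α, A' ⊆ A ∧ A'.Finite ∧ sInf A' = ⊥)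
    (p : α) (hΩ : ∃ x : α, x ≠ ⊥ ∧ x ⊓ p = ⊥) :
    (StronglyIrreducible p ↔
      ∃ a : α, IsAtom a ∧ a ⊓ p = ⊥ ∧ (∀ x : α, a ⊓ x = ⊥ → x ≤ p)) ∧
    (∀ a : α, IsAtom a → a ⊓ p = ⊥ → (∀ x : α, a ⊓ x = ⊥ → x ≤ p) →
      ∀ b : α, (a ≤ b ∨ b ≤ a) ∨ (p ≤ b ∨ b ≤ p)) := by
  obtain ⟨x₀, hx₀ne, hx₀p⟩ := hΩ
  -- There is a minimal element of Ω(p), which is an atom.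
  have hmin : ∃ a : α, IsAtom a ∧ a ⊓ p = ⊥ := by
    set S : Set α := {x | x ≠ ⊥ ∧ x ⊓ p = ⊥} with hS
    have hzorn : ∃ m, Minimal (· ∈ S) m := by
      have := zorn_le_nonempty₀ (α := αᵒᵈ) (OrderDual.ofDual ⁻¹' S) ?_
        (OrderDual.toDual x₀) ⟨hx₀ne, hx₀p⟩
      · obtain ⟨m, _, hm⟩ := this
        exact ⟨OrderDual.ofDual m, hm.1, fun y hy hym => hm.2 hy hym⟩
      · intro c hcS hc y hyc
        -- lower bound: sInf of the chain (as a set in α)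
        set C : Set α := OrderDual.ofDual '' c with hC
        have hCne : C.Nonempty := ⟨OrderDual.ofDual y, y, hyc, rfl⟩
        have hCchain : IsChain (· ≤ ·) C := by
          rintro _ ⟨u, hu, rfl⟩ _ ⟨v, hv, rfl⟩ huv
          rcases hc hu hv (fun h => huv (congrArg OrderDual.ofDual h)) with h | h
          · exact Or.inr h
          · exact Or.inl h
        have hCS : C ⊆ S := by rintro _ ⟨u, hu, rfl⟩; exact hcS hu
        have hInfne : sInf C ≠ ⊥ := by
          intro h
          obtain ⟨C', hC'C, hC'fin, hC'inf⟩ := hbot C h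
          rcases C'.eq_empty_or_nonempty with rfl | hC'ne
          · simp only [sInf_empty] at hC'inf
            exact hx₀ne (le_bot_iff.mp (hC'inf ▸ le_top))
          · obtain ⟨m, hmC', hmmin⟩ : ∃ m ∈ C', ∀ z ∈ C', id z ≤ id m → id m = id z := by
              obtain ⟨m, hm1, hm2⟩ := Set.Finite.exists_minimalFor id C' hC'fin hC'ne
              exact ⟨m, hm1, fun z hz h => le_antisymm (hm2 hz h) h⟩
            have hmle : ∀ z ∈ C', m ≤ z := by
              intro z hz
              rcases hCchain.total (hC'C hmC') (hC'C hz) with h | h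
              · exact h
              · exact (hmmin z hz h).le
            have : m = ⊥ := le_bot_iff.mp (hC'inf ▸ le_sInf hmle)
            exact (hCS (hC'C hmC')).1 this
        refine ⟨OrderDual.toDual (sInf C), ⟨hInfne, ?_⟩, ?_⟩
        · exact le_bot_iff.mp ((inf_le_inf_right p (sInf_le (show OrderDual.ofDual y ∈ C from ⟨y, hyc, rfl⟩))).trans
            (hcS hyc).2.le)
        · intro z hz
          exact sInf_le_iff.mpr fun b hb => hb ⟨z, hz, rfl⟩
    obtain ⟨a, ⟨hane, hap⟩, hamin⟩ := hzorn
    refine ⟨a, ⟨hane, fun b hba => ?_⟩, hap⟩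
    by_contra hbne
    have hbp : b ⊓ p = ⊥ := le_bot_iff.mp (hap ▸ inf_le_inf_right p hba.le)
    exact absurd (hamin ⟨hbne, hbp⟩ hba.le) (not_le_of_gt hba)
  constructor
  · constructor
    · intro hIrr
      obtain ⟨a, ha, hap⟩ := hmin
      refine ⟨a, ha, hap, fun x hx => ?_⟩
      rcases hIrr a x (by rw [hx]; exact bot_le) with h | h
      · exfalso
        refine ha.1 (le_bot_iff.mp ?_)
        rw [← hap]; exact le_inf le_rfl h
      · exact h
    · rintro ⟨a, ha, hap, hpc⟩ x y hxy
      by_contra hcon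
      push_neg at hcon
      have hax : a ≤ x := by
        have h := (ha.le_iff_eq (fun h => hcon.1 (hpc x h))).mp inf_le_left
        exact h.symm.le.trans inf_le_right
      have hay : a ≤ y := by
        have h := (ha.le_iff_eq (fun h => hcon.2 (hpc y h))).mp inf_le_left
        exact h.symm.le.trans inf_le_right
      have hap' : a ≤ p := (le_inf hax hay).trans hxy
      refine ha.1 (le_bot_iff.mp ?_)
      rw [← hap]; exact le_inf le_rfl hap' 
  · intro a ha hap hpc b
    by_cases hb : a ⊓ b = ⊥
    · exact Or.inr (Or.inr (hpc b hb))
    · have h := (ha.le_iff_eq hb).mp inf_le_left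
      exact Or.inl (Or.inl (h.symm.le.trans inf_le_right))
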